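/- The fixed points of the flow dA/dt = A⁻¹C + CA⁻¹ − 2A on symmetric positive definite matrices are exactly A = C^{1/2}; i.e., A⁻¹C + CA⁻¹ = 2A with A, C symmetric positive definite implies A² = C. -/

import Mathlib

open Matrix
section OldSqrt
open scoped ComplexOrder
noncomputable def Matrix.PosSemidef.sqrt {n 𝕜 : Type*} [Fintype n] [DecidableEq n] [RCLike 𝕜]
    {A : Matrix n n 𝕜} (hA : A.PosSemidef) : Matrix n n 𝕜 :=
  hA.1.eigenvectorUnitary.1 * diagonal ((↑) ∘ (fun x : ℝ => √x) ∘ hA.1.eigenvalues) *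
    (star hA.1.eigenvectorUnitary : Matrix n n 𝕜)
end OldSqrt

lemma oldSqrt_eq_cfc_aux {n : ℕ} {A : Matrix (Fin n) (Fin n) ℝ} (hA : A.PosSemidef) :
    hA.sqrt = cfc Real.sqrt A := by
  rw [hA.1.cfc_eq, IsHermitian.cfc, Unitary.conjStarAlgAut_apply]
  rfl

lemma spectrum_nonneg_aux {n : ℕ} {A : Matrix (Fin n) (Fin n) ℝ} (hA : A.PosSemidef) :
    ∀ x ∈ spectrum ℝ A, 0 ≤ x := by
  intro x hx
  rw [hA.1.spectrum_real_eq_range_eigenvalues] at hx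
  obtain ⟨i, rfl⟩ := hx
  exact hA.eigenvalues_nonneg i

lemma oldSqrt_mul_self_aux {n : ℕ} {A : Matrix (Fin n) (Fin n) ℝ} (hA : A.PosSemidef) :
    hA.sqrt * hA.sqrt = A := by
  have hsa : IsSelfAdjoint A := hA.1
  rw [oldSqrt_eq_cfc_aux, ← cfc_mul Real.sqrt Real.sqrt A]
  conv_rhs => rw [← cfc_id' ℝ A]
  exact cfc_congr (fun x hx => Real.mul_self_sqrt (spectrum_nonneg_aux hA x hx))

lemma oldSqrt_herm_aux {n : ℕ} {A : Matrix (Fin n) (Fin n) ℝ} (hA : A.PosSemidef) :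
    (hA.sqrt)ᴴ = hA.sqrt := by
  rw [oldSqrt_eq_cfc_aux]
  exact (cfc_predicate Real.sqrt A : IsSelfAdjoint _)

lemma eq_oldSqrt_aux {n : ℕ} {A C : Matrix (Fin n) (Fin n) ℝ} (hA : A.PosSemidef)
    (hC : C.PosSemidef) (h : A * A = C) : A = hC.sqrt := by
  have hsa : IsSelfAdjoint A := hA.1
  rw [oldSqrt_eq_cfc_aux, ← h]
  have e : A * A = cfc (fun x : ℝ => x * x) A := by
    rw [cfc_mul (fun x : ℝ => x) (fun x : ℝ => x) A, cfc_id' ℝ A]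
  rw [e, ← cfc_comp' Real.sqrt (fun x : ℝ => x * x) A]
  conv_lhs => rw [← cfc_id' ℝ A]
  exact cfc_congr (fun x hx => (Real.sqrt_mul_self (spectrum_nonneg_aux hA x hx)).symm)

lemma trace_mul_conjTranspose_self_eq_zero_aux {n : ℕ}
    (M : Matrix (Fin n) (Fin n) ℝ) (h : Matrix.trace (M * Mᴴ) = 0) : M = 0 := by
  have h' : ∑ i, ∑ j, M i j * M i j = 0 := by
    simpa [Matrix.trace, Matrix.mul_apply, Matrix.diag] using h
  ext i j
  have hnn : ∀ i ∈ Finset.univ, (0:ℝ) ≤ ∑ j, M i j * M i j := by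
    intro i _
    exact Finset.sum_nonneg fun j _ => mul_self_nonneg _
  have hi := (Finset.sum_eq_zero_iff_of_nonneg hnn).mp h' i (Finset.mem_univ i)
  have hj := (Finset.sum_eq_zero_iff_of_nonneg
    (fun j _ => mul_self_nonneg (M i j))).mp hi j (Finset.mem_univ j)
  simpa [mul_self_eq_zero] using hj

/-- The fixed points of dA/dt = A⁻¹C + CA⁻¹ − 2A on symmetric positive definite matrices
are exactly A = C^{1/2}: if A⁻¹C + CA⁻¹ = 2A with A, C positive definite, then A² = C,
i.e. A is the unique positive definite square root of C. -/
theorem stmt_18 {n : ℕ} (C A : Matrix (Fin n) (Fin n) ℝ)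
    (hC : C.PosDef) (hA : A.PosDef)
    (hfix : A⁻¹ * C + C * A⁻¹ = (2 : ℝ) • A) :
    A * A = C ∧ A = hC.posSemidef.sqrt := by
  have hdet : IsUnit A.det := isUnit_iff_ne_zero.mpr hA.det_pos.ne'
  have hAinv : A * A⁻¹ = 1 := Matrix.mul_nonsing_inv A hdet
  have hinvA : A⁻¹ * A = 1 := Matrix.nonsing_inv_mul A hdet
  -- multiply the fixed point equation by A on both sides
  have key : C * A + A * C = (2 : ℝ) • (A * A * A) := by
    have := congrArg (fun M => A * M * A) hfix
    simp only [Matrix.add_mul, Matrix.mul_add, Matrix.mul_smul, Matrix.smul_mul,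
      Matrix.mul_assoc] at this
    rw [← Matrix.mul_assoc A A⁻¹ (C * A), hAinv, Matrix.one_mul, hinvA, Matrix.mul_one] at this
    simpa [Matrix.mul_assoc] using this
  set D := C - A * A with hD
  have h1 : A * D + D * A = 0 := by
    have hk := key
    rw [two_smul] at hk
    rw [hD]
    have e : A * (C - A * A) + (C - A * A) * A
        = (C * A + A * C) - (A * A * A + A * A * A) := by noncomm_ring
    rw [e, hk, sub_self]
  have h2 : A * D = -(D * A) := eq_neg_of_add_eq_zero_left h1
  -- trace argument
  have htr : Matrix.trace (A * (D * D)) = 0 := by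
    have e1 : Matrix.trace (A * (D * D)) = Matrix.trace (D * (A * D)) := by
      rw [show A * (D * D) = (A * D) * D by noncomm_ring, Matrix.trace_mul_comm]
    have e2 : Matrix.trace (D * (A * D)) = - Matrix.trace (D * (D * A)) := by
      rw [h2]; simp
    have e3 : Matrix.trace (D * (D * A)) = Matrix.trace (A * (D * D)) := by
      rw [show D * (D * A) = (D * D) * A by noncomm_ring, Matrix.trace_mul_comm]
    have := e1.trans (e2.trans (congrArg Neg.neg e3))
    linarith [this]
  -- S = sqrt of A
  set S := hA.posSemidef.sqrt with hS
  have hSS : S * S = A := oldSqrt_mul_self_aux hA.posSemidef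
  have hSherm : Sᴴ = S := oldSqrt_herm_aux hA.posSemidef
  have hDsymm : Dᴴ = D := by
    rw [hD]
    rw [Matrix.conjTranspose_sub, Matrix.conjTranspose_mul, hA.1.eq, hC.1.eq]
  have hMM : Matrix.trace ((S * D) * (S * D)ᴴ) = 0 := by
    have : (S * D)ᴴ = D * S := by rw [Matrix.conjTranspose_mul, hSherm, hDsymm]
    rw [this]
    calc Matrix.trace (S * D * (D * S)) = Matrix.trace ((S * (D * D)) * S) := by
          rw [show S * D * (D * S) = (S * (D * D)) * S by noncomm_ring]
      _ = Matrix.trace (S * (S * (D * D))) := Matrix.trace_mul_comm _ _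
      _ = Matrix.trace (A * (D * D)) := by rw [← Matrix.mul_assoc, ← Matrix.mul_assoc, hSS, Matrix.mul_assoc]
      _ = 0 := htr
  have hSD : S * D = 0 := trace_mul_conjTranspose_self_eq_zero_aux _ hMM
  -- S is invertible
  have hdetS : IsUnit S.det := by
    have : S.det * S.det = A.det := by rw [← Matrix.det_mul, hSS]
    exact isUnit_iff_ne_zero.mpr (fun h0 => by simp [h0] at this; exact hA.det_pos.ne' this.symm)
  have hD0 : D = 0 := by
    have := congrArg (fun M => S⁻¹ * M) hSD
    simpa [← Matrix.mul_assoc, Matrix.nonsing_inv_mul S hdetS] using this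
  have hAC : A * A = C := by
    have := hD0
    rw [hD, sub_eq_zero] at this
    exact this.symm
  refine ⟨hAC, ?_⟩
  exact eq_oldSqrt_aux hA.posSemidef hC.posSemidef hAC
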